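/- For an n-ary Nambu-Lie superalgebra N and N-module V, the space W = {x₁∧⋯∧x_{n-2}∧v : xᵢ ∈ N, v ∈ V} with the action [x, y₁∧⋯∧y_{n-2}∧v]_W = Σ_{i=1}^{n-2} (−1)^{|x|(|y₁|+⋯+|y_{i-1}|)} y₁∧⋯∧ad(x)(yᵢ)∧⋯∧y_{n-2}∧v + (−1)^{|x|(|y₁|+⋯+|y_{n-2}|)} y₁∧⋯∧y_{n-2}∧ad(x)(v) is a module over the Leibniz superalgebra (L(N),[·,·]_L), i.e. [[x,y]_L, w]_W = [x,[y,w]_W]_W − (−1)^{|x||y|}[y,[x,w]_W]_W. -/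

import Mathlib

open Finset

noncomputable section

/-- The sign `(-1)^a` associated to a parity `a ∈ ℤ/2ℤ`. -/
def sgn (a : ZMod 2) : ℂ := (-1 : ℂ) ^ a.val

/-- Partial sum of parities `Σ_{j < i} p j`. -/
def psum {m : ℕ} (p : Fin m → ZMod 2) (i : Fin m) : ZMod 2 :=
  ∑ j ∈ Finset.univ.filter (fun j => j < i), p j

/-- Tail sum of parities `Σ_{j > i} p j`. -/
def tlsum {m : ℕ} (p : Fin m → ZMod 2) (i : Fin m) : ZMod 2 :=
  ∑ j ∈ Finset.univ.filter (fun j => i < j), p j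

/-- An `(m+1)`-ary Nambu-Lie superalgebra over `ℂ`: a `ℤ/2`-graded space with an even,
skew-supersymmetric `(m+1)`-linear bracket satisfying the super Nambu identity. -/
structure NambuLieSuper (m : ℕ) (N : Type) [AddCommGroup N] [Module ℂ N] where
  grading : ZMod 2 → Submodule ℂ N
  bracket : MultilinearMap ℂ (fun _ : Fin (m+1) => N) N
  bracket_even : ∀ (p : Fin (m+1) → ZMod 2) (x : Fin (m+1) → N),
      (∀ i, x i ∈ grading (p i)) → bracket x ∈ grading (∑ i, p i)
  skew : ∀ (p : Fin (m+1) → ZMod 2) (x : Fin (m+1) → N),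
      (∀ i, x i ∈ grading (p i)) → ∀ i j : Fin (m+1), (i : ℕ) + 1 = (j : ℕ) →
      bracket (x ∘ Equiv.swap i j) = - sgn (p i * p j) • bracket x
  nambu : ∀ (p : Fin (m+1) → ZMod 2) (q : Fin m → ZMod 2)
      (x : Fin (m+1) → N) (y : Fin m → N),
      (∀ i, x i ∈ grading (p i)) → (∀ j, y j ∈ grading (q j)) →
      bracket (Fin.snoc y (bracket x)) =
        ∑ i, sgn ((∑ j, q j) * psum p i) •
          bracket (Function.update x i (bracket (Fin.snoc y (x i))))

namespace NambuLieSuper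

variable {m : ℕ} {N : Type} [AddCommGroup N] [Module ℂ N]

/-- The inner map `ad(y₁,…,y_m)(z) = [y₁,…,y_m,z]`. -/
def ad (A : NambuLieSuper m N) (y : Fin m → N) (z : N) : N :=
  A.bracket (Fin.snoc y z)

/-- `D` is a derivation of parity `dp` of the Nambu-Lie superalgebra `A`. -/
def IsDerivation (A : NambuLieSuper m N) (dp : ZMod 2) (D : N → N) : Prop :=
  IsLinearMap ℂ D ∧
  (∀ j : ZMod 2, ∀ x ∈ A.grading j, D x ∈ A.grading (j + dp)) ∧
  ∀ (p : Fin (m+1) → ZMod 2) (x : Fin (m+1) → N),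
    (∀ i, x i ∈ A.grading (p i)) →
    D (A.bracket x) =
      ∑ k, sgn (dp * psum p k) • A.bracket (Function.update x k (D (x k)))

end NambuLieSuper

/-- A module (representation) over an `(k+2)`-ary Nambu-Lie superalgebra `A`:
a graded space `V` with an even multilinear action `[·,…,·]_V : N^{k+1} × V → V`
satisfying the two representation identities. -/
structure NambuModule {k : ℕ} {N : Type} [AddCommGroup N] [Module ℂ N]
    (A : NambuLieSuper (k+1) N) (V : Type) [AddCommGroup V] [Module ℂ V] where
  vgrading : ZMod 2 → Submodule ℂ V
  act : MultilinearMap ℂ (fun _ : Fin (k+1) => N) (V →ₗ[ℂ] V)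
  act_even : ∀ (p : Fin (k+1) → ZMod 2) (x : Fin (k+1) → N) (j : ZMod 2) (v : V),
      (∀ i, x i ∈ A.grading (p i)) → v ∈ vgrading j → act x v ∈ vgrading ((∑ i, p i) + j)
  rep1 : ∀ (p : Fin (k+2) → ZMod 2) (x : Fin (k+2) → N)
      (q : Fin k → ZMod 2) (y : Fin k → N) (v : V),
      (∀ i, x i ∈ A.grading (p i)) → (∀ j, y j ∈ A.grading (q j)) →
      act (Fin.cons (A.bracket x) y) v =
        ∑ i : Fin (k+2),
          ((-1 : ℂ) ^ ((k+1) - (i : ℕ)) * sgn (p i * tlsum p i)) •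
            act (i.removeNth x) (act (Fin.cons (x i) y) v)
  rep2 : ∀ (p q : Fin (k+1) → ZMod 2) (x y : Fin (k+1) → N) (v : V),
      (∀ i, x i ∈ A.grading (p i)) → (∀ j, y j ∈ A.grading (q j)) →
      ∑ i : Fin (k+1), sgn ((∑ j, q j) * psum p i) •
          act (Function.update x i (A.ad y (x i))) v =
        act y (act x v) - sgn ((∑ j, q j) * (∑ j, p j)) • act x (act y v)

lemma zmod2_two : (2 : ZMod 2) = 0 := rfl

lemma sgn_add (a b : ZMod 2) : sgn (a + b) = sgn a * sgn b := by
  simp only [sgn, ZMod.val_add, ← pow_add]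
  exact (neg_one_pow_eq_pow_mod_two (R := ℂ) _).symm

lemma sgn_sq (a : ZMod 2) : sgn a * sgn a = 1 := by
  fin_cases a <;>
    simp [sgn, ZMod.val]

lemma two_zsmul' (a : ZMod 2) : a + a = 0 := by
  fin_cases a <;> decide

lemma psum_update_of_not_lt {m : ℕ} (r : Fin m → ZMod 2) (i j : Fin m) (c : ZMod 2)
    (h : ¬ i < j) : psum (Function.update r i c) j = psum r j := by
  unfold psum
  refine Finset.sum_congr rfl fun t ht => ?_
  rw [Finset.mem_filter] at ht
  refine Function.update_of_ne (fun he => h ?_) _ _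
  rw [← he]; exact ht.2

lemma psum_update_of_lt {m : ℕ} (r : Fin m → ZMod 2) (i j : Fin m) (c : ZMod 2)
    (h : i < j) : psum (Function.update r i c) j = psum r j + r i + c := by
  unfold psum
  have hi : i ∈ Finset.univ.filter (fun t => t < j) := by simp [h]
  rw [Finset.sum_update_of_mem hi, Finset.sum_eq_sum_sdiff_singleton_add hi r]
  ring_nf
  rw [zmod2_two, mul_zero, add_zero]

lemma sum_update {m : ℕ} (r : Fin m → ZMod 2) (i : Fin m) (c : ZMod 2) :
    ∑ j, Function.update r i c j = (∑ j, r j) + r i + c := by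
  rw [Finset.sum_update_of_mem (Finset.mem_univ i),
    Finset.sum_eq_sum_sdiff_singleton_add (Finset.mem_univ i) r]
  ring_nf
  rw [zmod2_two, mul_zero, add_zero]

lemma sum_update_self {m : ℕ} (r : Fin m → ZMod 2) (i : Fin m) (c : ZMod 2) :
    ∑ j, Function.update r i (r i + c) j = (∑ j, r j) + c := by
  rw [sum_update]
  ring_nf
  rw [zmod2_two, mul_zero, add_zero]

lemma psum_update_self_of_lt {m : ℕ} (r : Fin m → ZMod 2) (i j : Fin m) (c : ZMod 2)
    (h : i < j) : psum (Function.update r i (r i + c)) j = psum r j + c := by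
  rw [psum_update_of_lt r i j _ h]
  ring_nf
  rw [zmod2_two, mul_zero, add_zero]

lemma psum_snoc_castSucc {m : ℕ} (q : Fin m → ZMod 2) (c : ZMod 2) (i : Fin m) :
    psum (Fin.snoc q c) i.castSucc = psum q i := by
  unfold psum
  rw [Finset.sum_filter, Finset.sum_filter, Fin.sum_univ_castSucc]
  simp [Fin.castSucc_lt_castSucc_iff, (Fin.castSucc_lt_last i).not_gt]

lemma psum_snoc_last {m : ℕ} (q : Fin m → ZMod 2) (c : ZMod 2) :
    psum (Fin.snoc q c) (Fin.last m) = ∑ j, q j := by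
  unfold psum
  rw [Finset.sum_filter, Fin.sum_univ_castSucc]
  simp [Fin.castSucc_lt_last]

lemma sum_snoc {m : ℕ} (q : Fin m → ZMod 2) (c : ZMod 2) :
    ∑ j, Fin.snoc q c j = (∑ j, q j) + c := by
  rw [Fin.sum_univ_castSucc]; simp

lemma zd1 : ∀ P Q a b : ZMod 2, Q*a + P*(b+Q) = P*Q + (P*b + Q*a) := by decide

lemma zd2 : ∀ P Q a b : ZMod 2, Q*a + P*b = P*Q + (P*b + Q*(a+P)) := by decide

set_option maxHeartbeats 2000000 in
open ExteriorAlgebra TensorProduct in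
/-- `W = ∧^{n-2}N ∧ V` (realized as wedges tensored with `V`), with the action
`[x, y₁∧⋯∧y_{n-2}∧v]_W = Σᵢ ± y₁∧⋯∧ad(x)(yᵢ)∧⋯∧v + ± y₁∧⋯∧y_{n-2}∧ad(x)(v)`,
is a module over the Leibniz superalgebra `(L(N), [·,·]_L)`:
`[[x,y]_L, w]_W = [x,[y,w]_W]_W − (−1)^{|x||y|}[y,[x,w]_W]_W` on homogeneous generators. -/
theorem w_leibniz_module {k : ℕ} {N V : Type} [AddCommGroup N] [Module ℂ N]
    [AddCommGroup V] [Module ℂ V]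
    (A : NambuLieSuper (k+1) N) (M : NambuModule A V)
    (lb : ExteriorAlgebra ℂ N →ₗ[ℂ] ExteriorAlgebra ℂ N →ₗ[ℂ] ExteriorAlgebra ℂ N)
    (hlb : ∀ (p q : Fin (k+1) → ZMod 2) (x y : Fin (k+1) → N),
      (∀ i, x i ∈ A.grading (p i)) → (∀ j, y j ∈ A.grading (q j)) →
      lb (ιMulti ℂ (k+1) x) (ιMulti ℂ (k+1) y) =
        ∑ i : Fin (k+1), sgn ((∑ j, p j) * psum q i) •
          ιMulti ℂ (k+1) (Function.update y i (A.ad x (y i))))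
    (actW : ExteriorAlgebra ℂ N →ₗ[ℂ]
      (ExteriorAlgebra ℂ N ⊗[ℂ] V) →ₗ[ℂ] (ExteriorAlgebra ℂ N ⊗[ℂ] V))
    (hactW : ∀ (p : Fin (k+1) → ZMod 2) (x : Fin (k+1) → N)
        (q : Fin k → ZMod 2) (y : Fin k → N) (pv : ZMod 2) (v : V),
      (∀ i, x i ∈ A.grading (p i)) → (∀ j, y j ∈ A.grading (q j)) → v ∈ M.vgrading pv →
      actW (ιMulti ℂ (k+1) x) (ιMulti ℂ k y ⊗ₜ[ℂ] v) =
        (∑ i : Fin k, sgn ((∑ j, p j) * psum q i) •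
            (ιMulti ℂ k (Function.update y i (A.ad x (y i))) ⊗ₜ[ℂ] v))
          + sgn ((∑ j, p j) * (∑ j, q j)) • (ιMulti ℂ k y ⊗ₜ[ℂ] (M.act x v)))
    (p q : Fin (k+1) → ZMod 2) (x y : Fin (k+1) → N)
    (r : Fin k → ZMod 2) (u : Fin k → N) (pv : ZMod 2) (v : V)
    (hx : ∀ i, x i ∈ A.grading (p i)) (hy : ∀ j, y j ∈ A.grading (q j))
    (hu : ∀ j, u j ∈ A.grading (r j)) (hv : v ∈ M.vgrading pv) :
    actW (lb (ιMulti ℂ (k+1) x) (ιMulti ℂ (k+1) y)) (ιMulti ℂ k u ⊗ₜ[ℂ] v) =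
      actW (ιMulti ℂ (k+1) x) (actW (ιMulti ℂ (k+1) y) (ιMulti ℂ k u ⊗ₜ[ℂ] v))
        - sgn ((∑ j, p j) * (∑ j, q j)) •
            actW (ιMulti ℂ (k+1) y) (actW (ιMulti ℂ (k+1) x) (ιMulti ℂ k u ⊗ₜ[ℂ] v)) := by
  classical
  have hadx : ∀ (c : ZMod 2) (z : N), z ∈ A.grading c → A.ad x z ∈ A.grading (c + ∑ j, p j) := by
    intro c z hz
    have h := A.bracket_even (Fin.snoc p c) (Fin.snoc x z) ?_
    · rw [sum_snoc] at h
      rwa [add_comm (∑ j, p j) c] at h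
    · intro i
      induction i using Fin.lastCases with
      | last => simpa using hz
      | cast i => simpa using hx i
  have hady : ∀ (c : ZMod 2) (z : N), z ∈ A.grading c → A.ad y z ∈ A.grading (c + ∑ j, q j) := by
    intro c z hz
    have h := A.bracket_even (Fin.snoc q c) (Fin.snoc y z) ?_
    · rw [sum_snoc] at h
      rwa [add_comm (∑ j, q j) c] at h
    · intro i
      induction i using Fin.lastCases with
      | last => simpa using hz
      | cast i => simpa using hy i
  have hnambu : ∀ (cz : ZMod 2) (z : N), z ∈ A.grading cz →
      ∑ i, sgn ((∑ j, p j) * psum q i) • A.ad (Function.update y i (A.ad x (y i))) z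
        = A.ad x (A.ad y z) - sgn ((∑ j, p j) * (∑ j, q j)) • A.ad y (A.ad x z) := by
    intro cz z hz
    have hmain := A.nambu (Fin.snoc q cz) p (Fin.snoc y z) x ?_ hx
    · rw [Fin.sum_univ_castSucc] at hmain
      simp only [Fin.snoc_castSucc, Fin.snoc_last, ← Fin.snoc_update, psum_snoc_castSucc,
        psum_snoc_last, Fin.update_snoc_last] at hmain
      rw [eq_sub_iff_add_eq]
      exact hmain.symm
    · intro i
      induction i using Fin.lastCases with
      | last => simpa using hz
      | cast i => simpa using hy i
  have hupd : ∀ {n : ℕ} (c : Fin n → ZMod 2) (w : Fin n → N), (∀ j, w j ∈ A.grading (c j)) →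
      ∀ (i : Fin n) (z : N) (cz : ZMod 2), z ∈ A.grading cz →
      ∀ j, Function.update w i z j ∈ A.grading (Function.update c i cz j) := by
    intro n c w hw i z cz hz j
    rcases eq_or_ne j i with rfl | hne
    · simpa using hz
    · rw [Function.update_of_ne hne, Function.update_of_ne hne]
      exact hw j
  have hrep := M.rep2 q p y x v hy hx
  have step1 : ∀ i : Fin (k+1),
      (actW (ιMulti ℂ (k+1) (Function.update y i (A.ad x (y i))))) (ιMulti ℂ k u ⊗ₜ[ℂ] v)
      = (∑ j : Fin k, sgn (((∑ j, q j) + (∑ j, p j)) * psum r j) •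
            (ιMulti ℂ k (Function.update u j
              (A.ad (Function.update y i (A.ad x (y i))) (u j))) ⊗ₜ[ℂ] v))
        + sgn (((∑ j, q j) + (∑ j, p j)) * (∑ j, r j)) •
            (ιMulti ℂ k u ⊗ₜ[ℂ] M.act (Function.update y i (A.ad x (y i))) v) := by
    intro i
    have h := hactW (Function.update q i (q i + ∑ j, p j))
        (Function.update y i (A.ad x (y i))) r u pv v
        (hupd q y hy i _ _ (hadx (q i) (y i) (hy i))) hu hv
    rwa [sum_update_self] at h
  have hL : (actW ((lb (ιMulti ℂ (k+1) x)) (ιMulti ℂ (k+1) y))) (ιMulti ℂ k u ⊗ₜ[ℂ] v)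
      = (∑ j : Fin k, sgn (((∑ j, q j) + (∑ j, p j)) * psum r j) •
          ((ιMulti ℂ k (Function.update u j (A.ad x (A.ad y (u j)))) ⊗ₜ[ℂ] v)
            - sgn ((∑ j, p j) * (∑ j, q j)) •
              (ιMulti ℂ k (Function.update u j (A.ad y (A.ad x (u j)))) ⊗ₜ[ℂ] v)))
        + sgn (((∑ j, q j) + (∑ j, p j)) * (∑ j, r j)) •
          ((ιMulti ℂ k u ⊗ₜ[ℂ] M.act x (M.act y v))
            - sgn ((∑ j, p j) * (∑ j, q j)) • (ιMulti ℂ k u ⊗ₜ[ℂ] M.act y (M.act x v))) := by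
    rw [hlb p q x y hx hy, map_sum, LinearMap.sum_apply]
    simp only [map_smul, LinearMap.smul_apply]
    rw [Finset.sum_congr rfl fun i _ =>
      congrArg (sgn ((∑ j, p j) * psum q i) • ·) (step1 i)]
    simp only [smul_add, Finset.smul_sum, smul_smul]
    rw [Finset.sum_add_distrib, Finset.sum_comm]
    congr 1
    · refine Finset.sum_congr rfl fun j _ => ?_
      set F : N →ₗ[ℂ] (ExteriorAlgebra ℂ N ⊗[ℂ] V) :=
        ((TensorProduct.mk ℂ (ExteriorAlgebra ℂ N) V).flip v).comp
          ((ιMulti ℂ k).toLinearMap u j) with hF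
      have hFa : ∀ w : N, (ιMulti ℂ k (Function.update u j w)) ⊗ₜ[ℂ] v = F w := fun w => rfl
      calc ∑ i : Fin (k+1),
            (sgn ((∑ j, p j) * psum q i) * sgn (((∑ j, q j) + (∑ j, p j)) * psum r j)) •
              (ιMulti ℂ k (Function.update u j
                (A.ad (Function.update y i (A.ad x (y i))) (u j))) ⊗ₜ[ℂ] v)
          = sgn (((∑ j, q j) + (∑ j, p j)) * psum r j) •
              F (∑ i : Fin (k+1), sgn ((∑ j, p j) * psum q i) •
                A.ad (Function.update y i (A.ad x (y i))) (u j)) := by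
            rw [map_sum, Finset.smul_sum]
            refine Finset.sum_congr rfl fun i _ => ?_
            rw [hFa, map_smul, smul_smul, mul_comm]
        _ = _ := by
            rw [hnambu (r j) (u j) (hu j), map_sub, map_smul, ← hFa, ← hFa]
    · set F2 : V →ₗ[ℂ] (ExteriorAlgebra ℂ N ⊗[ℂ] V) :=
        TensorProduct.mk ℂ (ExteriorAlgebra ℂ N) V (ιMulti ℂ k u) with hF2
      have hFa : ∀ w : V, (ιMulti ℂ k u) ⊗ₜ[ℂ] w = F2 w := fun w => rfl
      calc ∑ i : Fin (k+1),
            (sgn ((∑ j, p j) * psum q i) * sgn (((∑ j, q j) + (∑ j, p j)) * (∑ j, r j))) •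
              (ιMulti ℂ k u ⊗ₜ[ℂ] M.act (Function.update y i (A.ad x (y i))) v)
          = sgn (((∑ j, q j) + (∑ j, p j)) * (∑ j, r j)) •
              F2 (∑ i : Fin (k+1), sgn ((∑ j, p j) * psum q i) •
                M.act (Function.update y i (A.ad x (y i))) v) := by
            rw [map_sum, Finset.smul_sum]
            refine Finset.sum_congr rfl fun i _ => ?_
            rw [hFa, map_smul, smul_smul, mul_comm]
        _ = _ := by
            rw [hrep, map_sub, map_smul, ← hFa, ← hFa]
  have hY0 := hactW q y r u pv v hy hu hv
  have hX0 := hactW p x r u pv v hx hu hv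
  have stepXj : ∀ j : Fin k,
      (actW (ιMulti ℂ (k+1) x)) ((ιMulti ℂ k (Function.update u j (A.ad y (u j)))) ⊗ₜ[ℂ] v)
      = (∑ l : Fin k, sgn ((∑ j, p j) * psum (Function.update r j (r j + ∑ j, q j)) l) •
            (ιMulti ℂ k (Function.update (Function.update u j (A.ad y (u j))) l
              (A.ad x ((Function.update u j (A.ad y (u j))) l))) ⊗ₜ[ℂ] v))
        + sgn ((∑ j, p j) * ((∑ j, r j) + (∑ j, q j))) •
            ((ιMulti ℂ k (Function.update u j (A.ad y (u j)))) ⊗ₜ[ℂ] M.act x v) := by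
    intro j
    have h := hactW p x (Function.update r j (r j + ∑ j, q j))
        (Function.update u j (A.ad y (u j))) pv v hx
        (hupd r u hu j _ _ (hady (r j) (u j) (hu j))) hv
    rwa [sum_update_self] at h
  have stepYj : ∀ j : Fin k,
      (actW (ιMulti ℂ (k+1) y)) ((ιMulti ℂ k (Function.update u j (A.ad x (u j)))) ⊗ₜ[ℂ] v)
      = (∑ l : Fin k, sgn ((∑ j, q j) * psum (Function.update r j (r j + ∑ j, p j)) l) •
            (ιMulti ℂ k (Function.update (Function.update u j (A.ad x (u j))) l
              (A.ad y ((Function.update u j (A.ad x (u j))) l))) ⊗ₜ[ℂ] v))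
        + sgn ((∑ j, q j) * ((∑ j, r j) + (∑ j, p j))) •
            ((ιMulti ℂ k (Function.update u j (A.ad x (u j)))) ⊗ₜ[ℂ] M.act y v) := by
    intro j
    have h := hactW q y (Function.update r j (r j + ∑ j, p j))
        (Function.update u j (A.ad x (u j))) pv v hy
        (hupd r u hu j _ _ (hadx (r j) (u j) (hu j))) hv
    rwa [sum_update_self] at h
  have stepXv : (actW (ιMulti ℂ (k+1) x)) ((ιMulti ℂ k u) ⊗ₜ[ℂ] M.act y v)
      = (∑ l : Fin k, sgn ((∑ j, p j) * psum r l) •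
            (ιMulti ℂ k (Function.update u l (A.ad x (u l))) ⊗ₜ[ℂ] M.act y v))
        + sgn ((∑ j, p j) * (∑ j, r j)) • ((ιMulti ℂ k u) ⊗ₜ[ℂ] M.act x (M.act y v)) :=
    hactW p x r u ((∑ j, q j) + pv) (M.act y v) hx hu (M.act_even q y pv v hy hv)
  have stepYv : (actW (ιMulti ℂ (k+1) y)) ((ιMulti ℂ k u) ⊗ₜ[ℂ] M.act x v)
      = (∑ l : Fin k, sgn ((∑ j, q j) * psum r l) •
            (ιMulti ℂ k (Function.update u l (A.ad y (u l))) ⊗ₜ[ℂ] M.act x v))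
        + sgn ((∑ j, q j) * (∑ j, r j)) • ((ιMulti ℂ k u) ⊗ₜ[ℂ] M.act y (M.act x v)) :=
    hactW q y r u ((∑ j, p j) + pv) (M.act x v) hy hu (M.act_even p x pv v hx hv)
  have hXY : (actW (ιMulti ℂ (k+1) x)) ((actW (ιMulti ℂ (k+1) y)) (ιMulti ℂ k u ⊗ₜ[ℂ] v))
      = (∑ j : Fin k, sgn ((∑ j, q j) * psum r j) •
          ((∑ l : Fin k, sgn ((∑ j, p j) * psum (Function.update r j (r j + ∑ j, q j)) l) •
            (ιMulti ℂ k (Function.update (Function.update u j (A.ad y (u j))) l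
              (A.ad x ((Function.update u j (A.ad y (u j))) l))) ⊗ₜ[ℂ] v))
          + sgn ((∑ j, p j) * ((∑ j, r j) + (∑ j, q j))) •
            ((ιMulti ℂ k (Function.update u j (A.ad y (u j)))) ⊗ₜ[ℂ] M.act x v)))
        + sgn ((∑ j, q j) * (∑ j, r j)) •
          ((∑ l : Fin k, sgn ((∑ j, p j) * psum r l) •
            (ιMulti ℂ k (Function.update u l (A.ad x (u l))) ⊗ₜ[ℂ] M.act y v))
          + sgn ((∑ j, p j) * (∑ j, r j)) • ((ιMulti ℂ k u) ⊗ₜ[ℂ] M.act x (M.act y v))) := by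
    rw [hY0, map_add, map_sum, map_smul, stepXv]
    simp only [map_smul]
    rw [Finset.sum_congr rfl fun j _ =>
      congrArg (sgn ((∑ j, q j) * psum r j) • ·) (stepXj j)]
  have hYX : (actW (ιMulti ℂ (k+1) y)) ((actW (ιMulti ℂ (k+1) x)) (ιMulti ℂ k u ⊗ₜ[ℂ] v))
      = (∑ j : Fin k, sgn ((∑ j, p j) * psum r j) •
          ((∑ l : Fin k, sgn ((∑ j, q j) * psum (Function.update r j (r j + ∑ j, p j)) l) •
            (ιMulti ℂ k (Function.update (Function.update u j (A.ad x (u j))) l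
              (A.ad y ((Function.update u j (A.ad x (u j))) l))) ⊗ₜ[ℂ] v))
          + sgn ((∑ j, q j) * ((∑ j, r j) + (∑ j, p j))) •
            ((ιMulti ℂ k (Function.update u j (A.ad x (u j)))) ⊗ₜ[ℂ] M.act y v)))
        + sgn ((∑ j, p j) * (∑ j, r j)) •
          ((∑ l : Fin k, sgn ((∑ j, q j) * psum r l) •
            (ιMulti ℂ k (Function.update u l (A.ad y (u l))) ⊗ₜ[ℂ] M.act x v))
          + sgn ((∑ j, q j) * (∑ j, r j)) • ((ιMulti ℂ k u) ⊗ₜ[ℂ] M.act y (M.act x v))) := by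
    rw [hX0, map_add, map_sum, map_smul, stepYv]
    simp only [map_smul]
    rw [Finset.sum_congr rfl fun j _ =>
      congrArg (sgn ((∑ j, p j) * psum r j) • ·) (stepYj j)]
  have hsplitX : ∀ j : Fin k,
      (∑ l : Fin k, sgn ((∑ j, p j) * psum (Function.update r j (r j + ∑ j, q j)) l) •
        (ιMulti ℂ k (Function.update (Function.update u j (A.ad y (u j))) l
          (A.ad x ((Function.update u j (A.ad y (u j))) l))) ⊗ₜ[ℂ] v))
      = sgn ((∑ j, p j) * psum r j) •
          (ιMulti ℂ k (Function.update u j (A.ad x (A.ad y (u j)))) ⊗ₜ[ℂ] v)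
        + ∑ l ∈ Finset.univ.erase j,
            sgn ((∑ j, p j) * psum (Function.update r j (r j + ∑ j, q j)) l) •
              (ιMulti ℂ k (Function.update (Function.update u j (A.ad y (u j))) l
                (A.ad x (u l)))) ⊗ₜ[ℂ] v := by
    intro j
    rw [← Finset.add_sum_erase _ _ (Finset.mem_univ j)]
    congr 1
    · rw [psum_update_of_not_lt _ _ _ _ (lt_irrefl j), Function.update_self,
        Function.update_idem]
    · refine Finset.sum_congr rfl fun l hl => ?_
      rw [Function.update_of_ne (Finset.ne_of_mem_erase hl)]
  have hsplitY : ∀ j : Fin k,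
      (∑ l : Fin k, sgn ((∑ j, q j) * psum (Function.update r j (r j + ∑ j, p j)) l) •
        (ιMulti ℂ k (Function.update (Function.update u j (A.ad x (u j))) l
          (A.ad y ((Function.update u j (A.ad x (u j))) l))) ⊗ₜ[ℂ] v))
      = sgn ((∑ j, q j) * psum r j) •
          (ιMulti ℂ k (Function.update u j (A.ad y (A.ad x (u j)))) ⊗ₜ[ℂ] v)
        + ∑ l ∈ Finset.univ.erase j,
            sgn ((∑ j, q j) * psum (Function.update r j (r j + ∑ j, p j)) l) •
              (ιMulti ℂ k (Function.update (Function.update u j (A.ad x (u j))) l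
                (A.ad y (u l)))) ⊗ₜ[ℂ] v := by
    intro j
    rw [← Finset.add_sum_erase _ _ (Finset.mem_univ j)]
    congr 1
    · rw [psum_update_of_not_lt _ _ _ _ (lt_irrefl j), Function.update_self,
        Function.update_idem]
    · refine Finset.sum_congr rfl fun l hl => ?_
      rw [Function.update_of_ne (Finset.ne_of_mem_erase hl)]
  rw [hL, hXY, hYX]
  simp only [hsplitX, hsplitY]
  simp only [smul_add, smul_sub, smul_smul, Finset.smul_sum, Finset.sum_add_distrib,
    Finset.sum_sub_distrib]
  have s1 : ∀ S : ZMod 2, sgn (((∑ j, q j) + (∑ j, p j)) * S)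
      = sgn ((∑ j, q j) * S) * sgn ((∑ j, p j) * S) := fun S => by
    rw [← sgn_add]; exact congrArg sgn (by ring)
  have s2 : ∀ S : ZMod 2, sgn (((∑ j, q j) + (∑ j, p j)) * S) * sgn ((∑ j, p j) * (∑ j, q j))
      = sgn ((∑ j, p j) * (∑ j, q j)) * (sgn ((∑ j, p j) * S) * sgn ((∑ j, q j) * S)) :=
    fun S => by
    simp only [← sgn_add]; exact congrArg sgn (by ring)
  have s3 : ∀ S : ZMod 2,
      sgn ((∑ j, q j) * S) * sgn ((∑ j, p j) * ((∑ j, r j) + (∑ j, q j)))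
      = sgn ((∑ j, p j) * (∑ j, q j)) *
          (sgn ((∑ j, p j) * (∑ j, r j)) * sgn ((∑ j, q j) * S)) := fun S => by
    simp only [← sgn_add]; exact congrArg sgn (by ring)
  have s4 : ∀ S : ZMod 2,
      sgn ((∑ j, q j) * (∑ j, r j)) * sgn ((∑ j, p j) * S)
      = sgn ((∑ j, p j) * (∑ j, q j)) *
          (sgn ((∑ j, p j) * S) * sgn ((∑ j, q j) * ((∑ j, r j) + (∑ j, p j)))) := fun S => by
    simp only [← sgn_add]; exact congrArg sgn (zd2 _ _ _ _)
  have hOFF :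
      (∑ j : Fin k, ∑ l ∈ Finset.univ.erase j,
        (sgn ((∑ j, q j) * psum r j) *
          sgn ((∑ j, p j) * psum (Function.update r j (r j + ∑ j, q j)) l)) •
          ((ιMulti ℂ k (Function.update (Function.update u j (A.ad y (u j))) l
            (A.ad x (u l)))) ⊗ₜ[ℂ] v))
      = ∑ j : Fin k, ∑ l ∈ Finset.univ.erase j,
        (sgn ((∑ j, p j) * (∑ j, q j)) * (sgn ((∑ j, p j) * psum r j) *
          sgn ((∑ j, q j) * psum (Function.update r j (r j + ∑ j, p j)) l))) •
          ((ιMulti ℂ k (Function.update (Function.update u j (A.ad x (u j))) l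
            (A.ad y (u l)))) ⊗ₜ[ℂ] v) := by
    symm
    rw [Finset.sum_comm' (s' := fun l => Finset.univ.erase l) (t' := (Finset.univ : Finset (Fin k)))
      (fun a b => by simp [Finset.mem_erase, ne_comm])]
    refine Finset.sum_congr rfl fun j _ => Finset.sum_congr rfl fun l hl => ?_
    have hne : l ≠ j := (Finset.mem_erase.mp hl).1
    rw [Function.update_comm hne]
    rcases lt_or_gt_of_ne hne with h | h
    · -- l < j
      rw [psum_update_self_of_lt r l j _ h, psum_update_of_not_lt r j l _ (asymm h)]
      congr 1
      simp only [← sgn_add]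
      exact congrArg sgn (zd2 _ _ _ _).symm
    · -- j < l
      rw [psum_update_of_not_lt r l j _ (asymm h), psum_update_self_of_lt r j l _ h]
      congr 1
      simp only [← sgn_add]
      exact congrArg sgn (zd1 _ _ _ _).symm
  have hA1 : (∑ j : Fin k, sgn (((∑ j, q j) + (∑ j, p j)) * psum r j) •
        ((ιMulti ℂ k (Function.update u j (A.ad x (A.ad y (u j))))) ⊗ₜ[ℂ] v))
      = ∑ j : Fin k, (sgn ((∑ j, q j) * psum r j) * sgn ((∑ j, p j) * psum r j)) •
        ((ιMulti ℂ k (Function.update u j (A.ad x (A.ad y (u j))))) ⊗ₜ[ℂ] v) :=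
    Finset.sum_congr rfl fun j _ => by rw [s1]
  have hA2 : (∑ j : Fin k, (sgn (((∑ j, q j) + (∑ j, p j)) * psum r j) *
        sgn ((∑ j, p j) * (∑ j, q j))) •
        ((ιMulti ℂ k (Function.update u j (A.ad y (A.ad x (u j))))) ⊗ₜ[ℂ] v))
      = ∑ j : Fin k, (sgn ((∑ j, p j) * (∑ j, q j)) *
          (sgn ((∑ j, p j) * psum r j) * sgn ((∑ j, q j) * psum r j))) •
        ((ιMulti ℂ k (Function.update u j (A.ad y (A.ad x (u j))))) ⊗ₜ[ℂ] v) :=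
    Finset.sum_congr rfl fun j _ => by rw [s2]
  have hA3 : sgn (((∑ j, q j) + (∑ j, p j)) * (∑ j, r j)) •
        ((ιMulti ℂ k u) ⊗ₜ[ℂ] M.act x (M.act y v))
      = (sgn ((∑ j, q j) * (∑ j, r j)) * sgn ((∑ j, p j) * (∑ j, r j))) •
        ((ιMulti ℂ k u) ⊗ₜ[ℂ] M.act x (M.act y v)) := by rw [s1]
  have hA4 : (sgn (((∑ j, q j) + (∑ j, p j)) * (∑ j, r j)) * sgn ((∑ j, p j) * (∑ j, q j))) •
        ((ιMulti ℂ k u) ⊗ₜ[ℂ] M.act y (M.act x v))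
      = (sgn ((∑ j, p j) * (∑ j, q j)) *
          (sgn ((∑ j, p j) * (∑ j, r j)) * sgn ((∑ j, q j) * (∑ j, r j)))) •
        ((ιMulti ℂ k u) ⊗ₜ[ℂ] M.act y (M.act x v)) := by rw [s2]
  have hB3 : (∑ j : Fin k, (sgn ((∑ j, q j) * psum r j) *
        sgn ((∑ j, p j) * ((∑ j, r j) + (∑ j, q j)))) •
        ((ιMulti ℂ k (Function.update u j (A.ad y (u j)))) ⊗ₜ[ℂ] M.act x v))
      = ∑ j : Fin k, (sgn ((∑ j, p j) * (∑ j, q j)) *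
          (sgn ((∑ j, p j) * (∑ j, r j)) * sgn ((∑ j, q j) * psum r j))) •
        ((ιMulti ℂ k (Function.update u j (A.ad y (u j)))) ⊗ₜ[ℂ] M.act x v) :=
    Finset.sum_congr rfl fun j _ => by rw [s3]
  have hB4 : (∑ j : Fin k, (sgn ((∑ j, q j) * (∑ j, r j)) * sgn ((∑ j, p j) * psum r j)) •
        ((ιMulti ℂ k (Function.update u j (A.ad x (u j)))) ⊗ₜ[ℂ] M.act y v))
      = ∑ j : Fin k, (sgn ((∑ j, p j) * (∑ j, q j)) *
          (sgn ((∑ j, p j) * psum r j) * sgn ((∑ j, q j) * ((∑ j, r j) + (∑ j, p j))))) •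
        ((ιMulti ℂ k (Function.update u j (A.ad x (u j)))) ⊗ₜ[ℂ] M.act y v) :=
    Finset.sum_congr rfl fun j _ => by rw [s4]
  rw [hA1, hA2, hA3, hA4, hB3, hB4, hOFF]
  abel
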